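/- For every even integer n ≥ 2, the collection of n/2 + 1 hyperplanes given by the equations x₁ + x₂ + … + x_n = n/2 and x_{2i−1} − x_{2i} = 0 for i ∈ [n/2] forms an essential cover of the n-cube {0,1}^n. -/

import Mathlib

open Finset

/-- A point of the `n`-cube `{0,1}^n`. -/
def IsCubeVertex {n : ℕ} (x : Fin n → ℝ) : Prop := ∀ j, x j = 0 ∨ x j = 1

/-- The hyperplanes `⟨v i, x⟩ = μ i`, `i ∈ [k]`, with `v i ∈ ℝ^n \ {0}`, form an
essential cover of the `n`-cube `{0,1}^n`. -/
def IsEssentialCover {n k : ℕ} (v : Fin k → Fin n → ℝ) (μ : Fin k → ℝ) : Prop :=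
  (∀ i, v i ≠ 0) ∧
  (∀ x : Fin n → ℝ, IsCubeVertex x → ∃ i, ∑ j, v i j * x j = μ i) ∧
  (∀ j : Fin n, ∃ i, v i j ≠ 0) ∧
  (∀ i, ∃ x : Fin n → ℝ, IsCubeVertex x ∧ ∑ j, v i j * x j = μ i ∧
    ∀ i', i' ≠ i → ∑ j, v i' j * x j ≠ μ i')


def Xv (n : ℕ) (x : Fin n → ℝ) : ℕ → ℝ := fun j => if h : j < n then x ⟨j, h⟩ else 0

lemma Xv_eval (n : ℕ) (x : Fin n → ℝ) (j : ℕ) (h : j < n) : Xv n x j = x ⟨j, h⟩ := dif_pos h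

lemma sum_pairs (m : ℕ) (f : ℕ → ℝ) :
    ∑ j ∈ range (2*m), f j = ∑ t ∈ range m, (f (2*t) + f (2*t+1)) := by
  induction m with
  | zero => simp
  | succ m ih =>
    have h2 : 2 * (m+1) = 2*m + 1 + 1 := by ring
    rw [h2, sum_range_succ, sum_range_succ, sum_range_succ, ih]
    ring

lemma conv0 (n : ℕ) (x : Fin n → ℝ) :
    (∑ j : Fin n, x j) = ∑ j ∈ range n, Xv n x j := by
  rw [← Fin.sum_univ_eq_sum_range (fun j => Xv n x j) n]
  exact Finset.sum_congr rfl fun j _ => by simp [Xv, j.isLt]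

lemma conv2 (n : ℕ) (x : Fin n → ℝ) (t : ℕ) :
    (∑ j : Fin n, (if (j:ℕ) = 2*t then (1:ℝ) else if (j:ℕ) = 2*t+1 then -1 else 0) * x j)
      = ∑ j ∈ range n, (if j = 2*t then (1:ℝ) else if j = 2*t+1 then -1 else 0) * Xv n x j := by
  rw [← Fin.sum_univ_eq_sum_range (fun j => (if j = 2*t then (1:ℝ) else if j = 2*t+1 then -1 else 0) * Xv n x j) n]
  exact Finset.sum_congr rfl fun j _ => by simp [Xv, j.isLt]

lemma two_term (m t : ℕ) (ht : t < m) (g : ℕ → ℝ) :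
    ∑ j ∈ range (2*m), (if j = 2*t then (1:ℝ) else if j = 2*t+1 then -1 else 0) * g j
      = g (2*t) - g (2*t+1) := by
  rw [sum_pairs]
  have h0 : ∀ b ∈ range m, b ≠ t →
      ((if 2*b = 2*t then (1:ℝ) else if 2*b = 2*t+1 then -1 else 0) * g (2*b)
        + (if 2*b+1 = 2*t then (1:ℝ) else if 2*b+1 = 2*t+1 then -1 else 0) * g (2*b+1)) = 0 := by
    intro b _ hbt
    have h1 : 2*b ≠ 2*t := by omega
    have h2 : 2*b ≠ 2*t+1 := by omega
    have h3 : 2*b+1 ≠ 2*t := by omega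
    have h4 : 2*b+1 ≠ 2*t+1 := by omega
    simp [h1, h2, h3, h4]
  rw [Finset.sum_eq_single_of_mem t (mem_range.2 ht) h0]
  have h1 : 2*t+1 ≠ 2*t := by omega
  simp [h1]
  ring

lemma pair_sum (n m t : ℕ) (hm : n = 2*m) (ht : t < m) (x : Fin n → ℝ) :
    (∑ j : Fin n, (if (j:ℕ) = 2*t then (1:ℝ) else if (j:ℕ) = 2*t+1 then -1 else 0) * x j)
      = Xv n x (2*t) - Xv n x (2*t+1) := by
  rw [conv2]; rw [show range n = range (2*m) by rw [hm]]
  exact two_term m t ht (Xv n x)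

/-- For every even `n ≥ 2`, the `n/2 + 1` hyperplanes given by
`x₁ + ⋯ + x_n = n/2` and `x_{2i-1} - x_{2i} = 0` for `i ∈ [n/2]` form an essential
cover of the `n`-cube `{0,1}^n`. (Coordinates are `0`-indexed here: the `i`-th
hyperplane, `1 ≤ i ≤ n/2`, reads `x_{2(i-1)} - x_{2(i-1)+1} = 0`.) -/
theorem construction_essential_cover (n : ℕ) (hn : 2 ≤ n) (heven : Even n) :
    IsEssentialCover
      (fun i : Fin (n / 2 + 1) => fun j : Fin n =>
        if (i : ℕ) = 0 then 1
        else if (j : ℕ) = 2 * ((i : ℕ) - 1) then 1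
        else if (j : ℕ) = 2 * ((i : ℕ) - 1) + 1 then -1
        else 0)
      (fun i : Fin (n / 2 + 1) => if (i : ℕ) = 0 then (n : ℝ) / 2 else 0) := by
  obtain ⟨m, hm⟩ : ∃ m, n = 2*m := by
    obtain ⟨r, hr⟩ := heven; exact ⟨r, by omega⟩
  have hd : n / 2 = m := by omega
  have hm1 : 1 ≤ m := by omega
  have hcast : (n : ℝ) / 2 = (m : ℝ) := by
    rw [hm]; push_cast; ring
  refine ⟨?_, ?_, ?_, ?_⟩
  · -- (E0) v i ≠ 0
    intro i hzero
    by_cases hi : (i : ℕ) = 0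
    · have := congrFun hzero ⟨0, by omega⟩
      simp [hi] at this
    · have hjlt : 2 * ((i : ℕ) - 1) < n := by
        have := i.isLt; omega
      have := congrFun hzero ⟨2 * ((i : ℕ) - 1), hjlt⟩
      simp [hi] at this
  · -- (E1) cover
    intro x hx
    by_cases hcase : ∀ t, t < m → Xv n x (2*t) ≠ Xv n x (2*t+1)
    · refine ⟨0, ?_⟩
      simp only [Fin.val_zero, eq_self_iff_true, if_true, one_mul]
      rw [conv0, show range n = range (2*m) by rw [hm], sum_pairs]
      have hpair : ∀ t ∈ range m, Xv n x (2*t) + Xv n x (2*t+1) = 1 := by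
        intro t ht
        rw [mem_range] at ht
        have l1 : 2*t < n := by omega
        have l2 : 2*t+1 < n := by omega
        rw [Xv_eval n x _ l1, Xv_eval n x _ l2]
        have hne := hcase t ht
        rw [Xv_eval n x _ l1, Xv_eval n x _ l2] at hne
        rcases hx ⟨2*t, l1⟩ with h1 | h1 <;> rcases hx ⟨2*t+1, l2⟩ with h2 | h2 <;>
          grind
      rw [Finset.sum_congr rfl hpair]
      simp [hcast]
    · push_neg at hcase
      obtain ⟨t, htm, hteq⟩ := hcase
      refine ⟨⟨t+1, by omega⟩, ?_⟩
      have hne : (t:ℕ)+1 ≠ 0 := by omega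
      simp only [Fin.val_mk, if_neg hne, Nat.add_sub_cancel]
      rw [pair_sum n m t hm htm x, hteq]
      ring
  · -- (E2) every coordinate used
    intro j
    refine ⟨0, ?_⟩
    simp
  · -- (E3) essentiality
    intro i
    by_cases hi : (i : ℕ) = 0
    · -- hyperplane 0 : use the alternating point
      refine ⟨fun j => if (j:ℕ) % 2 = 0 then 1 else 0, ?_, ?_, ?_⟩
      · intro j; by_cases h : (j:ℕ) % 2 = 0 <;> simp [h]
      · simp only [hi, eq_self_iff_true, if_true, one_mul]
        rw [conv0, show range n = range (2*m) by rw [hm], sum_pairs]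
        have hpair : ∀ t ∈ range m,
            Xv n (fun j => if (j:ℕ) % 2 = 0 then (1:ℝ) else 0) (2*t)
              + Xv n (fun j => if (j:ℕ) % 2 = 0 then (1:ℝ) else 0) (2*t+1) = 1 := by
          intro t ht
          rw [mem_range] at ht
          have l1 : 2*t < n := by omega
          have l2 : 2*t+1 < n := by omega
          rw [Xv_eval _ _ _ l1, Xv_eval _ _ _ l2]
          have e1 : (2*t) % 2 = 0 := by omega
          have e2 : (2*t+1) % 2 ≠ 0 := by omega
          simp [e1, e2]
        rw [Finset.sum_congr rfl hpair]
        simp [hcast]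
      · intro i' hi'
        have hi'0 : (i' : ℕ) ≠ 0 := by
          intro h; exact hi' (Fin.ext (by rw [h, hi]))
        have htm : (i' : ℕ) - 1 < m := by have := i'.isLt; omega
        simp only [if_neg hi'0]
        rw [pair_sum n m ((i':ℕ)-1) hm htm]
        have l1 : 2*((i':ℕ)-1) < n := by omega
        have l2 : 2*((i':ℕ)-1)+1 < n := by omega
        rw [Xv_eval _ _ _ l1, Xv_eval _ _ _ l2]
        have e1 : (2*((i':ℕ)-1)) % 2 = 0 := by omega
        have e2 : (2*((i':ℕ)-1)+1) % 2 ≠ 0 := by omega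
        simp [e1, e2]
    · -- hyperplane i ≥ 1
      set t0 := (i : ℕ) - 1 with ht0
      have ht0m : t0 < m := by have := i.isLt; omega
      refine ⟨fun j => if (j:ℕ) % 2 = 0 ∧ (j:ℕ) ≠ 2*t0 then 1 else 0, ?_, ?_, ?_⟩
      · intro j; by_cases h : (j:ℕ) % 2 = 0 ∧ (j:ℕ) ≠ 2*t0 <;> simp [h]
      · simp only [if_neg hi]
        rw [pair_sum n m t0 hm ht0m]
        have l1 : 2*t0 < n := by omega
        have l2 : 2*t0+1 < n := by omega
        rw [Xv_eval _ _ _ l1, Xv_eval _ _ _ l2]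
        have e2 : (2*t0+1) % 2 ≠ 0 := by omega
        simp [e2]
      · intro i' hi'
        by_cases hi'0 : (i' : ℕ) = 0
        · -- the big hyperplane misses this point
          simp only [hi'0, eq_self_iff_true, if_true, one_mul]
          rw [conv0, show range n = range (2*m) by rw [hm], sum_pairs]
          have hpair : ∀ t ∈ range m,
              Xv n (fun j => if (j:ℕ) % 2 = 0 ∧ (j:ℕ) ≠ 2*t0 then (1:ℝ) else 0) (2*t)
                + Xv n (fun j => if (j:ℕ) % 2 = 0 ∧ (j:ℕ) ≠ 2*t0 then (1:ℝ) else 0) (2*t+1)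
              = if t = t0 then 0 else 1 := by
            intro t ht
            rw [mem_range] at ht
            have l1 : 2*t < n := by omega
            have l2 : 2*t+1 < n := by omega
            rw [Xv_eval _ _ _ l1, Xv_eval _ _ _ l2]
            have e2 : ¬((2*t+1) % 2 = 0 ∧ (2*t+1:ℕ) ≠ 2*t0) := by omega
            by_cases h : t = t0
            · have e1 : ¬((2*t) % 2 = 0 ∧ (2*t:ℕ) ≠ 2*t0) := by omega
              have e3 : (2*t0+1) % 2 = 1 := by omega
              simp [e1, e2, e3, h]
            · have e1 : (2*t) % 2 = 0 ∧ (2*t:ℕ) ≠ 2*t0 := by omega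
              simp [e1, e2, h]
          rw [Finset.sum_congr rfl hpair]
          have : ∑ t ∈ range m, (if t = t0 then (0:ℝ) else 1)
              = ∑ t ∈ range m, ((1:ℝ) - if t = t0 then 1 else 0) := by
            apply Finset.sum_congr rfl; intro t _; by_cases h : t = t0 <;> simp [h]
          rw [this, Finset.sum_sub_distrib, Finset.sum_ite_eq' (range m) t0 (fun _ => (1:ℝ)),
            if_pos (mem_range.2 ht0m)]
          simp [hcast]
        · have htm' : (i' : ℕ) - 1 < m := by have := i'.isLt; omega
          have hneq : (i' : ℕ) - 1 ≠ t0 := by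
            intro h
            apply hi'
            apply Fin.ext
            omega
          simp only [if_neg hi'0]
          rw [pair_sum n m ((i':ℕ)-1) hm htm']
          have l1 : 2*((i':ℕ)-1) < n := by omega
          have l2 : 2*((i':ℕ)-1)+1 < n := by omega
          rw [Xv_eval _ _ _ l1, Xv_eval _ _ _ l2]
          have e1 : (2*((i':ℕ)-1)) % 2 = 0 ∧ (2*((i':ℕ)-1):ℕ) ≠ 2*t0 := by omega
          have e2 : ¬((2*((i':ℕ)-1)+1) % 2 = 0 ∧ (2*((i':ℕ)-1)+1:ℕ) ≠ 2*t0) := by omega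
          simp [e1, e2]
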